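/- Fix 1 ≤ j ≤ d, set ν = Σ_{1 ≤ l ≤ d, l ≠ j} 1/(m_{j,l} ω_l), let η be the least common multiple of the numbers m_{j,l} ω_l for l ≠ j, and let e_j be the j-th standard basis vector. Let C₅ be the nonzero real constant in the one-term asymptotic expansion χ̂_D(t k e_j) = C₅ sin(−2π t k + πν/2)(tk)^{−1−ν} + O((tk)^{−1−ν−1/η}) (k a positive integer), and define g(t) = Σ_{k ∈ ℤ, k ≠ 0} C₅ · sin(−2π t |k| + π ν/2) · |k|^{−1−ν}. Then: (i) there is a constant C with | Σ_{k ∈ ℤ, k ≠ 0} χ̂_D(t k e_j) − t^{−1−ν} g(t) | ≤ C · t^{−1−ν−1/η} for all t ≥ 1; (ii) g is periodic with period 1; and (iii) limsup_{t → ∞} |g(t)| > 0. -/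

import Mathlib

open MeasureTheory Finset Real Filter Pointwise

noncomputable section

/-- The block of (0-indexed) coordinates `l` with `dp p ≤ l < dp (p+1)`. -/
def block (dd : ℕ) (dp : ℕ → ℕ) (p : ℕ) : Finset (Fin dd) :=
  Finset.univ.filter fun l => dp p ≤ (l : ℕ) ∧ (l : ℕ) < dp (p + 1)

/-- The defining function of the domain `D`. -/
def Ffun (dd nn : ℕ) (dp m : ℕ → ℕ) (ω : Fin dd → ℕ)
    (x : EuclideanSpace ℝ (Fin dd)) : ℝ :=
  ∑ p ∈ Finset.range nn, (∑ l ∈ block dd dp p, x l ^ ω l) ^ m p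

/-- The domain `D`. -/
def Dset (dd nn : ℕ) (dp m : ℕ → ℕ) (ω : Fin dd → ℕ) :
    Set (EuclideanSpace ℝ (Fin dd)) :=
  {x | Ffun dd nn dp m ω x ≤ 1}

/-- The exponents `m_{j,l}`. -/
def mjl (dd : ℕ) (m : ℕ → ℕ) (pIdx : Fin dd → ℕ) (j l : Fin dd) : ℕ :=
  if pIdx j = pIdx l then 1 else m (pIdx l)

/-- The Fourier transform of the indicator function of a set. -/
def ftInd (dd : ℕ) (D : Set (EuclideanSpace ℝ (Fin dd)))
    (ξ : EuclideanSpace ℝ (Fin dd)) : ℂ :=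
  ∫ x in D, Complex.exp (-2 * Real.pi * Complex.I * ((inner ℝ x ξ : ℝ) : ℂ))

/-- The Fourier transform of a (real-valued) function. -/
def ftFun (dd : ℕ) (f : EuclideanSpace ℝ (Fin dd) → ℝ)
    (ξ : EuclideanSpace ℝ (Fin dd)) : ℂ :=
  ∫ x, (f x : ℂ) * Complex.exp (-2 * Real.pi * Complex.I * ((inner ℝ x ξ : ℝ) : ℂ))

/-- The number of lattice points in the dilate `t • D`. -/
def latCount (dd : ℕ) (D : Set (EuclideanSpace ℝ (Fin dd))) (t : ℝ) : ℕ :=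
  Set.ncard {k : Fin dd → ℤ | (WithLp.toLp 2 (fun i => (k i : ℝ)) : EuclideanSpace ℝ (Fin dd)) ∈ t • D}

/-! ### Auxiliary lemmas -/

private lemma summable_abs_int_rpow {r : ℝ} (hr : r < -1) :
    Summable (fun k : ℤ => |(k : ℝ)| ^ r) := by
  have h : Summable (fun n : ℕ => (n : ℝ) ^ r) := Real.summable_nat_rpow.mpr hr
  refine Summable.of_nat_of_neg (h.congr fun n => ?_) (h.congr fun n => ?_) <;>
  · congr 1
    push_cast
    simp

private lemma summable_subtype_abs_rpow {r : ℝ} (hr : r < -1) :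
    Summable (fun k : {k : ℤ // k ≠ 0} => |((k : ℤ) : ℝ)| ^ r) :=
  (summable_abs_int_rpow hr).subtype {k : ℤ | k ≠ 0}

private lemma tsum_subtype_ne_zero {f : ℤ → ℝ} (hf0 : f 0 = 0) :
    ∑' k : {k : ℤ // k ≠ 0}, f k = ∑' k : ℤ, f k := by
  apply tsum_subtype_eq_of_support_subset
  intro k hk
  simp only [Function.mem_support] at hk
  intro h0
  exact hk (by rw [h0, hf0])

private lemma abs_sin_term_le (c s : ℝ) {y : ℝ} (hy : 0 ≤ y) :
    |c * Real.sin s * y| ≤ |c| * y := by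
  rw [abs_mul, abs_mul, abs_of_nonneg hy]
  have h1 : |Real.sin s| ≤ 1 := abs_le.mpr ⟨Real.neg_one_le_sin s, Real.sin_le_one s⟩
  have := mul_le_mul_of_nonneg_right (mul_le_mul_of_nonneg_left h1 (abs_nonneg c)) hy
  simpa using this

private lemma euclidean_single_neg {dd : ℕ} (j : Fin dd) (a : ℝ) :
    EuclideanSpace.single j (-a) = -EuclideanSpace.single j a := by
  ext i
  rw [PiLp.neg_apply, EuclideanSpace.single_apply, EuclideanSpace.single_apply]
  split_ifs <;> simp

private lemma ftInd_neg (dd : ℕ) (D : Set (EuclideanSpace ℝ (Fin dd)))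
    (ξ : EuclideanSpace ℝ (Fin dd)) :
    ftInd dd D (-ξ) = (starRingEnd ℂ) (ftInd dd D ξ) := by
  unfold ftInd
  rw [← integral_conj]
  apply integral_congr_ae
  filter_upwards with x
  have h1 : (inner ℝ x (-ξ) : ℝ) = -(inner ℝ x ξ : ℝ) := inner_neg_right x ξ
  rw [h1, ← Complex.exp_conj]
  congr 1
  simp only [map_mul, map_neg, map_ofNat, Complex.conj_I, Complex.conj_ofReal,
    Complex.ofReal_neg]
  ring

private def uu (r : ℝ) (n : ℕ) : ℝ :=
  Real.sin (Real.pi * (n : ℝ) / 2) * (n : ℝ) ^ r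

private def phiR (r : ℝ) (k : ℤ) : ℝ :=
  Real.sin (Real.pi * |(k : ℝ)| / 2) * |(k : ℝ)| ^ r

private lemma uu_even (r : ℝ) (i : ℕ) : uu r (2 * i) = 0 := by
  have h : Real.pi * ((2 * i : ℕ) : ℝ) / 2 = ((i : ℕ) : ℝ) * Real.pi := by push_cast; ring
  rw [uu, h, Real.sin_nat_mul_pi, zero_mul]

private lemma uu_A (r : ℝ) (j : ℕ) : uu r (2 * (2 * j) + 1) = (4 * (j : ℝ) + 1) ^ r := by
  have h : Real.pi * ((2 * (2 * j) + 1 : ℕ) : ℝ) / 2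
      = Real.pi / 2 + (j : ℤ) * (2 * Real.pi) := by push_cast; ring
  have h2 : ((2 * (2 * j) + 1 : ℕ) : ℝ) = 4 * (j : ℝ) + 1 := by push_cast; ring
  rw [uu, h, Real.sin_add_int_mul_two_pi, Real.sin_pi_div_two, one_mul, h2]

private lemma uu_B (r : ℝ) (j : ℕ) : uu r (2 * (2 * j + 1) + 1) = -((4 * (j : ℝ) + 3) ^ r) := by
  have h : Real.pi * ((2 * (2 * j + 1) + 1 : ℕ) : ℝ) / 2
      = (Real.pi / 2 + Real.pi) + (j : ℤ) * (2 * Real.pi) := by push_cast; ring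
  have h2 : ((2 * (2 * j + 1) + 1 : ℕ) : ℝ) = 4 * (j : ℝ) + 3 := by push_cast; ring
  rw [uu, h, Real.sin_add_int_mul_two_pi, Real.sin_add_pi, Real.sin_pi_div_two, h2]
  ring

private lemma summable_shift_rpow {r : ℝ} (hr : r < -1) (a b : ℝ) (ha : 1 ≤ a) (hb : 1 ≤ b) :
    Summable (fun j : ℕ => (a * (j : ℝ) + b) ^ r) := by
  have hshift : Summable (fun j : ℕ => ((j + 1 : ℕ) : ℝ) ^ r) :=
    (Real.summable_nat_rpow.mpr hr).comp_injective Nat.succ_injective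
  refine Summable.of_nonneg_of_le (fun j => Real.rpow_nonneg (by positivity) r)
    (fun j => ?_) hshift
  have h1 : (0:ℝ) < ((j + 1 : ℕ) : ℝ) := by positivity
  refine Real.rpow_le_rpow_of_nonpos h1 ?_ (by linarith)
  push_cast
  have h2 : (1:ℝ) * (j:ℝ) ≤ a * (j:ℝ) :=
    mul_le_mul_of_nonneg_right ha (Nat.cast_nonneg j)
  linarith

set_option maxHeartbeats 1000000 in
private lemma sum_sin_int_pos {r : ℝ} (hr : r < -1) : 0 < ∑' k : ℤ, phiR r k := by
  have hsA : Summable (fun j : ℕ => (4 * (j : ℝ) + 1) ^ r) :=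
    summable_shift_rpow hr 4 1 (by norm_num) le_rfl
  have hsB : Summable (fun j : ℕ => (4 * (j : ℝ) + 3) ^ r) :=
    summable_shift_rpow hr 4 3 (by norm_num) (by norm_num)
  have hvA : Summable (fun j : ℕ => uu r (2 * (2 * j) + 1)) := hsA.congr fun j => (uu_A r j).symm
  have hvB : Summable (fun j : ℕ => uu r (2 * (2 * j + 1) + 1)) :=
    hsB.neg.congr fun j => (uu_B r j).symm
  have hv : Summable (fun i : ℕ => uu r (2 * i + 1)) :=
    (HasSum.even_add_odd (f := fun i : ℕ => uu r (2 * i + 1)) hvA.hasSum hvB.hasSum).summable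
  have he : Summable (fun i : ℕ => uu r (2 * i)) :=
    summable_zero.congr fun i => (uu_even r i).symm
  have hu : Summable (uu r) := (HasSum.even_add_odd (f := uu r) he.hasSum hv.hasSum).summable
  have t_odd : ∑' i : ℕ, uu r (2 * i + 1)
      = (∑' j : ℕ, (4 * (j : ℝ) + 1) ^ r) - ∑' j : ℕ, (4 * (j : ℝ) + 3) ^ r := by
    rw [← tsum_even_add_odd (f := fun i => uu r (2 * i + 1)) hvA hvB,
      tsum_congr (uu_A r), tsum_congr (uu_B r), tsum_neg]
    ring
  have t_even : ∑' i : ℕ, uu r (2 * i) = 0 := by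
    rw [tsum_congr (uu_even r)]; exact tsum_zero
  have hlt : (∑' j : ℕ, (4 * (j : ℝ) + 3) ^ r) < ∑' j : ℕ, (4 * (j : ℝ) + 1) ^ r := by
    refine Summable.tsum_lt_tsum (i := 0) (fun j => ?_) ?_ hsB hsA
    · exact Real.rpow_le_rpow_of_nonpos (by positivity)
        (by linarith [Nat.cast_nonneg (α := ℝ) j]) (by linarith)
    · norm_num
      exact Real.rpow_lt_one_of_one_lt_of_neg (by norm_num) (by linarith)
  have hupos : 0 < ∑' n : ℕ, uu r n := by
    rw [← tsum_even_add_odd (f := uu r) he hv, t_even, zero_add, t_odd]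
    linarith
  have hcast : ∀ n : ℕ, phiR r (n : ℤ) = uu r n := by
    intro n; rw [phiR, uu]; push_cast; rw [abs_of_nonneg (Nat.cast_nonneg n)]
  have hcastneg : ∀ n : ℕ, phiR r (-(n : ℤ)) = uu r n := by
    intro n; rw [phiR, uu]; push_cast; rw [abs_neg, abs_of_nonneg (Nat.cast_nonneg n)]
  have h1 : Summable (fun n : ℕ => phiR r (n : ℤ)) := hu.congr fun n => (hcast n).symm
  have h2 : Summable (fun n : ℕ => phiR r (-(n : ℤ))) := hu.congr fun n => (hcastneg n).symm
  have hphi0 : phiR r 0 = 0 := by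
    rw [phiR]
    norm_num
  have key := Summable.tsum_of_nat_of_neg (f := phiR r) h1 h2
  rw [tsum_congr hcast, tsum_congr hcastneg, hphi0] at key
  rw [key]
  linarith

set_option maxHeartbeats 2000000 in
theorem axis_sum_asymptotics
    (dd nn : ℕ) (dp m : ℕ → ℕ) (ω : Fin dd → ℕ) (pIdx : Fin dd → ℕ)
    (hd : 3 ≤ dd) (hn : 1 ≤ nn) (hdp0 : dp 0 = 0) (hdpn : dp nn = dd)
    (hmono : ∀ p < nn, dp p < dp (p + 1)) (hm : ∀ p < nn, 1 ≤ m p)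
    (hω : ∀ l, Even (ω l) ∧ 0 < ω l)
    (hp : ∀ i : Fin dd, pIdx i < nn ∧ dp (pIdx i) ≤ (i : ℕ) ∧ (i : ℕ) < dp (pIdx i + 1))
    (j : Fin dd) (C₅ : ℝ) (hC₅ : C₅ ≠ 0)
    (hexp : ∃ C' > 0, ∀ t : ℝ, 1 ≤ t → ∀ k : ℕ, 0 < k →
      ‖(ftInd dd (Dset dd nn dp m ω) (EuclideanSpace.single j (t * k)) -
          ((C₅ * Real.sin (-2 * Real.pi * (t * k) +
                Real.pi * (∑ l ∈ Finset.univ.erase j,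
                    1 / ((mjl dd m pIdx j l : ℝ) * (ω l : ℝ))) / 2) *
              (t * k) ^ (-1 - ∑ l ∈ Finset.univ.erase j,
                  1 / ((mjl dd m pIdx j l : ℝ) * (ω l : ℝ))) : ℝ) : ℂ))‖ ≤
        C' * (t * k) ^ (-1 - (∑ l ∈ Finset.univ.erase j,
              1 / ((mjl dd m pIdx j l : ℝ) * (ω l : ℝ)))
            - 1 / (((Finset.univ.erase j).lcm
                (fun l => mjl dd m pIdx j l * ω l) : ℕ) : ℝ))) :
    let ν : ℝ := ∑ l ∈ Finset.univ.erase j, 1 / ((mjl dd m pIdx j l : ℝ) * (ω l : ℝ))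
    let η : ℕ := (Finset.univ.erase j).lcm (fun l => mjl dd m pIdx j l * ω l)
    let g : ℝ → ℝ := fun t => ∑' k : {k : ℤ // k ≠ 0},
      C₅ * Real.sin (-2 * Real.pi * t * ((|(k : ℤ)| : ℤ) : ℝ) + Real.pi * ν / 2) *
        ((|(k : ℤ)| : ℤ) : ℝ) ^ (-1 - ν)
    (∃ C > 0, ∀ t : ℝ, 1 ≤ t →
        ‖((∑' k : {k : ℤ // k ≠ 0},
              ftInd dd (Dset dd nn dp m ω)
                (EuclideanSpace.single j (t * ((k : ℤ) : ℝ)))) -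
            ((t ^ (-1 - ν) * g t : ℝ) : ℂ))‖ ≤ C * t ^ (-1 - ν - 1 / (η : ℝ))) ∧
      (∀ t : ℝ, g (t + 1) = g t) ∧
      0 < Filter.limsup (fun t : ℝ => |g t|) Filter.atTop := by
  obtain ⟨C', hC'0, hC'⟩ := hexp
  intro ν η g
  have hνpos : 0 < ν := by
    refine Finset.sum_pos (fun l _ => ?_) ?_
    · have hm1 : 1 ≤ mjl dd m pIdx j l := by
        rw [mjl]
        split
        · exact le_rfl
        · exact hm _ (hp l).1
      have h1 : (0:ℝ) < (mjl dd m pIdx j l : ℝ) := by exact_mod_cast hm1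
      have h2 : (0:ℝ) < (ω l : ℝ) := by exact_mod_cast (hω l).2
      positivity
    · rw [← Finset.card_pos, Finset.card_erase_of_mem (Finset.mem_univ j),
        Finset.card_univ, Fintype.card_fin]
      omega
  have hηnn : (0:ℝ) ≤ 1 / (η : ℝ) := by positivity
  have hr1 : -1 - ν < -1 := by linarith
  have hr2 : -1 - ν - 1 / (η : ℝ) < -1 := by linarith
  have hS1sum : Summable (fun k : {k : ℤ // k ≠ 0} => |((k : ℤ) : ℝ)| ^ (-1 - ν)) :=
    summable_subtype_abs_rpow hr1
  have hS2sum : Summable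
      (fun k : {k : ℤ // k ≠ 0} => |((k : ℤ) : ℝ)| ^ (-1 - ν - 1 / (η : ℝ))) :=
    summable_subtype_abs_rpow hr2
  have hS1pos : 0 < ∑' k : {k : ℤ // k ≠ 0}, |((k : ℤ) : ℝ)| ^ (-1 - ν) :=
    Summable.tsum_pos hS1sum (fun k => Real.rpow_nonneg (abs_nonneg _) _) ⟨1, one_ne_zero⟩
      (Real.rpow_pos_of_pos (by norm_num) _)
  have hS2pos : 0 < ∑' k : {k : ℤ // k ≠ 0}, |((k : ℤ) : ℝ)| ^ (-1 - ν - 1 / (η : ℝ)) :=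
    Summable.tsum_pos hS2sum (fun k => Real.rpow_nonneg (abs_nonneg _) _) ⟨1, one_ne_zero⟩
      (Real.rpow_pos_of_pos (by norm_num) _)
  have hC2 : ∀ t : ℝ, 1 ≤ t → ∀ k : ℕ, 0 < k →
      ‖ftInd dd (Dset dd nn dp m ω) (EuclideanSpace.single j (t * k)) -
          ((C₅ * Real.sin (-2 * Real.pi * (t * k) + Real.pi * ν / 2) *
            (t * k) ^ (-1 - ν) : ℝ) : ℂ)‖ ≤
        C' * (t * k) ^ (-1 - ν - 1 / (η : ℝ)) := hC'
  -- pointwise main estimate, for all nonzero integers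
  have hmain : ∀ t : ℝ, 1 ≤ t → ∀ k : ℤ, k ≠ 0 →
      ‖ftInd dd (Dset dd nn dp m ω) (EuclideanSpace.single j (t * (k : ℝ))) -
          ((t ^ (-1 - ν) *
            (C₅ * Real.sin (-2 * Real.pi * t * |(k : ℝ)| + Real.pi * ν / 2) *
              |(k : ℝ)| ^ (-1 - ν)) : ℝ) : ℂ)‖ ≤
        C' * (t ^ (-1 - ν - 1 / (η : ℝ)) * |(k : ℝ)| ^ (-1 - ν - 1 / (η : ℝ))) := by
    intro t ht k hk
    have ht0 : (0:ℝ) < t := lt_of_lt_of_le one_pos ht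
    have hn0 : 0 < k.natAbs := Int.natAbs_pos.mpr hk
    have hnr : ((k.natAbs : ℕ) : ℝ) = |(k : ℝ)| := by
      rw [Nat.cast_natAbs, Int.cast_abs]
    have hb := hC2 t ht k.natAbs hn0
    have e1 : (C₅ * Real.sin (-2 * Real.pi * (t * ((k.natAbs : ℕ) : ℝ)) + Real.pi * ν / 2) *
          (t * ((k.natAbs : ℕ) : ℝ)) ^ (-1 - ν))
        = t ^ (-1 - ν) *
            (C₅ * Real.sin (-2 * Real.pi * t * ((k.natAbs : ℕ) : ℝ) + Real.pi * ν / 2) *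
              ((k.natAbs : ℕ) : ℝ) ^ (-1 - ν)) := by
      rw [show -2 * Real.pi * (t * ((k.natAbs : ℕ) : ℝ))
            = -2 * Real.pi * t * ((k.natAbs : ℕ) : ℝ) from by ring,
        Real.mul_rpow ht0.le (Nat.cast_nonneg _)]
      ring
    rw [e1, Real.mul_rpow ht0.le (Nat.cast_nonneg _)] at hb
    rcases lt_or_ge k 0 with hneg | hpos
    · have hkr : (k : ℝ) = -((k.natAbs : ℕ) : ℝ) := by
        rw [hnr, abs_of_neg (show (k : ℝ) < 0 by exact_mod_cast hneg)]; ring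
      rw [← hnr, hkr, show t * -((k.natAbs : ℕ) : ℝ) = -(t * ((k.natAbs : ℕ) : ℝ)) from by ring,
        euclidean_single_neg, ftInd_neg]
      rw [show ((t ^ (-1 - ν) *
            (C₅ * Real.sin (-2 * Real.pi * t * ((k.natAbs : ℕ) : ℝ) + Real.pi * ν / 2) *
              ((k.natAbs : ℕ) : ℝ) ^ (-1 - ν)) : ℝ) : ℂ)
          = (starRingEnd ℂ) ((t ^ (-1 - ν) *
            (C₅ * Real.sin (-2 * Real.pi * t * ((k.natAbs : ℕ) : ℝ) + Real.pi * ν / 2) *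
              ((k.natAbs : ℕ) : ℝ) ^ (-1 - ν)) : ℝ) : ℂ) from (Complex.conj_ofReal _).symm,
        ← map_sub, Complex.norm_conj]
      exact hb
    · have hkr : (k : ℝ) = ((k.natAbs : ℕ) : ℝ) := by
        rw [hnr, abs_of_nonneg (show (0:ℝ) ≤ (k : ℝ) by exact_mod_cast hpos)]
      rw [← hnr, hkr]
      exact hb
  -- the series defining `g`, rewritten
  have hgF : ∀ t : ℝ, g t = ∑' k : {k : ℤ // k ≠ 0},
      C₅ * Real.sin (-2 * Real.pi * t * |((k : ℤ) : ℝ)| + Real.pi * ν / 2) *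
        |((k : ℤ) : ℝ)| ^ (-1 - ν) :=
    fun t => tsum_congr fun k => by rw [Int.cast_abs]
  have hnormF : ∀ t : ℝ, Summable (fun k : {k : ℤ // k ≠ 0} =>
      ‖C₅ * Real.sin (-2 * Real.pi * t * |((k : ℤ) : ℝ)| + Real.pi * ν / 2) *
        |((k : ℤ) : ℝ)| ^ (-1 - ν)‖) := by
    intro t
    refine Summable.of_nonneg_of_le (fun k => norm_nonneg _) (fun k => ?_)
      (hS1sum.mul_left |C₅|)
    rw [Real.norm_eq_abs]
    exact abs_sin_term_le _ _ (Real.rpow_nonneg (abs_nonneg _) _)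
  have hsumF : ∀ t : ℝ, Summable (fun k : {k : ℤ // k ≠ 0} =>
      C₅ * Real.sin (-2 * Real.pi * t * |((k : ℤ) : ℝ)| + Real.pi * ν / 2) *
        |((k : ℤ) : ℝ)| ^ (-1 - ν)) :=
    fun t => (hnormF t).of_norm
  have hgabs : ∀ t : ℝ, |g t| ≤ |C₅| * ∑' k : {k : ℤ // k ≠ 0}, |((k : ℤ) : ℝ)| ^ (-1 - ν) := by
    intro t
    rw [hgF t, ← Real.norm_eq_abs]
    refine le_trans (norm_tsum_le_tsum_norm (hnormF t)) ?_
    rw [← tsum_mul_left]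
    refine Summable.tsum_le_tsum (fun k => ?_) (hnormF t) (hS1sum.mul_left _)
    rw [Real.norm_eq_abs]
    exact abs_sin_term_le _ _ (Real.rpow_nonneg (abs_nonneg _) _)
  -- periodicity
  have hper : ∀ t : ℝ, g (t + 1) = g t := by
    intro t
    refine tsum_congr fun k => ?_
    have harg : -2 * Real.pi * (t + 1) * ((|(k : ℤ)| : ℤ) : ℝ) + Real.pi * ν / 2
        = (-2 * Real.pi * t * ((|(k : ℤ)| : ℤ) : ℝ) + Real.pi * ν / 2)
          + ((-|(k : ℤ)| : ℤ) : ℝ) * (2 * Real.pi) := by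
      push_cast
      ring
    rw [harg, Real.sin_add_int_mul_two_pi]
  refine ⟨⟨C' * ∑' k : {k : ℤ // k ≠ 0}, |((k : ℤ) : ℝ)| ^ (-1 - ν - 1 / (η : ℝ)),
      mul_pos hC'0 hS2pos, ?_⟩, hper, ?_⟩
  · -- part (i)
    intro t ht
    have hle : ∀ k : {k : ℤ // k ≠ 0},
        ‖ftInd dd (Dset dd nn dp m ω) (EuclideanSpace.single j (t * ((k : ℤ) : ℝ))) -
          ((t ^ (-1 - ν) *
            (C₅ * Real.sin (-2 * Real.pi * t * |((k : ℤ) : ℝ)| + Real.pi * ν / 2) *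
              |((k : ℤ) : ℝ)| ^ (-1 - ν)) : ℝ) : ℂ)‖ ≤
        (C' * t ^ (-1 - ν - 1 / (η : ℝ))) * |((k : ℤ) : ℝ)| ^ (-1 - ν - 1 / (η : ℝ)) := by
      intro k
      have h := hmain t ht (k : ℤ) k.2
      calc ‖_‖ ≤ C' * (t ^ (-1 - ν - 1 / (η : ℝ)) *
          |((k : ℤ) : ℝ)| ^ (-1 - ν - 1 / (η : ℝ))) := h
        _ = _ := by ring
    have hErr : Summable (fun k : {k : ℤ // k ≠ 0} =>
        ftInd dd (Dset dd nn dp m ω) (EuclideanSpace.single j (t * ((k : ℤ) : ℝ))) -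
          ((t ^ (-1 - ν) *
            (C₅ * Real.sin (-2 * Real.pi * t * |((k : ℤ) : ℝ)| + Real.pi * ν / 2) *
              |((k : ℤ) : ℝ)| ^ (-1 - ν)) : ℝ) : ℂ)) :=
      Summable.of_norm_bounded (hS2sum.mul_left _) hle
    have hMc : Summable (fun k : {k : ℤ // k ≠ 0} =>
        ((t ^ (-1 - ν) *
            (C₅ * Real.sin (-2 * Real.pi * t * |((k : ℤ) : ℝ)| + Real.pi * ν / 2) *
              |((k : ℤ) : ℝ)| ^ (-1 - ν)) : ℝ) : ℂ)) :=
      Complex.summable_ofReal.mpr ((hsumF t).mul_left _)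
    have hE : Summable (fun k : {k : ℤ // k ≠ 0} =>
        ftInd dd (Dset dd nn dp m ω) (EuclideanSpace.single j (t * ((k : ℤ) : ℝ)))) := by
      have h := hErr.add hMc
      exact h.congr fun k => by simp
    have hnormsum : Summable (fun k : {k : ℤ // k ≠ 0} =>
        ‖ftInd dd (Dset dd nn dp m ω) (EuclideanSpace.single j (t * ((k : ℤ) : ℝ))) -
          ((t ^ (-1 - ν) *
            (C₅ * Real.sin (-2 * Real.pi * t * |((k : ℤ) : ℝ)| + Real.pi * ν / 2) *
              |((k : ℤ) : ℝ)| ^ (-1 - ν)) : ℝ) : ℂ)‖) :=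
      Summable.of_nonneg_of_le (fun k => norm_nonneg _) hle (hS2sum.mul_left _)
    have hofr : ((t ^ (-1 - ν) * g t : ℝ) : ℂ) = ∑' k : {k : ℤ // k ≠ 0},
        ((t ^ (-1 - ν) *
            (C₅ * Real.sin (-2 * Real.pi * t * |((k : ℤ) : ℝ)| + Real.pi * ν / 2) *
              |((k : ℤ) : ℝ)| ^ (-1 - ν)) : ℝ) : ℂ) := by
      rw [hgF t, ← tsum_mul_left, Complex.ofReal_tsum]
    rw [hofr, ← Summable.tsum_sub hE hMc]
    refine le_trans (norm_tsum_le_tsum_norm hnormsum) ?_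
    refine le_trans (Summable.tsum_le_tsum hle hnormsum (hS2sum.mul_left _)) ?_
    rw [tsum_mul_left]
    exact le_of_eq (by ring)
  · -- part (iii)
    obtain ⟨t₀, ht₀⟩ : ∃ t₀ : ℝ, g t₀ ≠ 0 := by
      by_cases hs : Real.sin (Real.pi * ν / 2) = 0
      · refine ⟨1/4, ?_⟩
        have hcos : Real.cos (Real.pi * ν / 2) ≠ 0 := by
          intro hc
          have h := Real.sin_sq_add_cos_sq (Real.pi * ν / 2)
          rw [hs, hc] at h
          norm_num at h
        have hval : g (1/4) = (-(C₅ * Real.cos (Real.pi * ν / 2))) *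
            ∑' k : {k : ℤ // k ≠ 0}, phiR (-1 - ν) (k : ℤ) := by
          rw [← tsum_mul_left]
          refine tsum_congr fun k => ?_
          rw [Int.cast_abs]
          simp only [phiR]
          have harg : -2 * Real.pi * (1/4 : ℝ) * |((k : ℤ) : ℝ)| + Real.pi * ν / 2
              = Real.pi * ν / 2 - Real.pi * |((k : ℤ) : ℝ)| / 2 := by ring
          rw [harg, Real.sin_sub, hs, zero_mul, zero_sub]
          ring
        have hsub : ∑' k : {k : ℤ // k ≠ 0}, phiR (-1 - ν) (k : ℤ)
            = ∑' k : ℤ, phiR (-1 - ν) k :=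
          tsum_subtype_ne_zero (by rw [phiR]; norm_num)
        rw [hval, hsub]
        exact mul_ne_zero (neg_ne_zero.mpr (mul_ne_zero hC₅ hcos))
          (ne_of_gt (sum_sin_int_pos hr1))
      · refine ⟨0, ?_⟩
        have hval : g 0 = (C₅ * Real.sin (Real.pi * ν / 2)) *
            ∑' k : {k : ℤ // k ≠ 0}, |((k : ℤ) : ℝ)| ^ (-1 - ν) := by
          rw [← tsum_mul_left]
          refine tsum_congr fun k => ?_
          rw [Int.cast_abs]
          have harg : -2 * Real.pi * (0:ℝ) * |((k : ℤ) : ℝ)| + Real.pi * ν / 2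
              = Real.pi * ν / 2 := by ring
          rw [harg]
        rw [hval]
        exact mul_ne_zero (mul_ne_zero hC₅ hs) (ne_of_gt hS1pos)
    have hshift : ∀ n : ℕ, g (t₀ + n) = g t₀ := by
      intro n
      induction n with
      | zero => simp
      | succ n ih =>
        have h1 : t₀ + ((n + 1 : ℕ) : ℝ) = (t₀ + n) + 1 := by push_cast; ring
        rw [h1, hper, ih]
    have hfreq : ∃ᶠ t in Filter.atTop, |g t₀| ≤ |g t| := by
      rw [Filter.frequently_atTop]
      intro b
      refine ⟨t₀ + ⌈b - t₀⌉₊, ?_, ?_⟩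
      · have h := Nat.le_ceil (b - t₀)
        linarith
      · rw [hshift]
    have hbdd : Filter.IsBoundedUnder (· ≤ ·) Filter.atTop (fun t : ℝ => |g t|) :=
      Filter.isBoundedUnder_of
        ⟨|C₅| * ∑' k : {k : ℤ // k ≠ 0}, |((k : ℤ) : ℝ)| ^ (-1 - ν), fun t => hgabs t⟩
    exact lt_of_lt_of_le (abs_pos.mpr ht₀) (Filter.le_limsup_of_frequently_le hfreq hbdd)
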